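/- The function x ↦ log((sin x)/x) / log((π² − x²)/π²) is strictly decreasing on the open interval (0, π). -/

import Mathlib

open Real Set Filter Topology

/-- ψ(s) = (s-t) * (log s - log (s-t)) is strictly increasing on [1,∞) for 0<t<1. -/
lemma aux_psi {t : ℝ} (ht0 : 0 < t) (ht1 : t < 1) {c : ℝ} (hc : 1 < c) :
    (1 - t) * (-Real.log (1 - t)) < (c - t) * (-Real.log (1 - t / c)) := by
  set ψ : ℝ → ℝ := fun s => (s - t) * (Real.log s - Real.log (s - t)) with hψ
  have hderiv : ∀ s ∈ Set.Ici (1 : ℝ), HasDerivAt ψ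
      ((Real.log s - Real.log (s - t)) + (s - t) * (1 / s - 1 / (s - t))) s := by
    intro s hs
    have hs1 : (1 : ℝ) ≤ s := hs
    have hs0 : (0 : ℝ) < s := lt_of_lt_of_le one_pos hs1
    have hst : (0 : ℝ) < s - t := by linarith
    have h1 : HasDerivAt (fun s : ℝ => s - t) 1 s := (hasDerivAt_id s).sub_const t
    have hlog2 : HasDerivAt (fun s : ℝ => Real.log (s - t)) (1 / (s - t)) s := by
      have := (Real.hasDerivAt_log hst.ne').comp s h1
      simpa [one_div, Function.comp_def] using this
    have h2 : HasDerivAt (fun s : ℝ => Real.log s - Real.log (s - t))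
        (1 / s - 1 / (s - t)) s := by
      simpa [one_div, Pi.sub_def] using (Real.hasDerivAt_log hs0.ne').sub hlog2
    have : HasDerivAt ψ (1 * (Real.log s - Real.log (s - t)) + (s - t) * (1 / s - 1 / (s - t))) s :=
      h1.mul h2
    convert this using 1
    ring
  have hmono : StrictMonoOn ψ (Set.Ici 1) := by
    apply strictMonoOn_of_deriv_pos (convex_Ici 1)
    · exact fun s hs => (hderiv s hs).continuousAt.continuousWithinAt
    · intro s hs
      rw [interior_Ici] at hs
      have hs1 : (1 : ℝ) < s := hs
      have hs0 : (0 : ℝ) < s := by linarith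
      have hst : (0 : ℝ) < s - t := by linarith
      rw [(hderiv s (le_of_lt hs1)).deriv]
      have hu0 : (0 : ℝ) < (s - t) / s := div_pos hst hs0
      have hu1 : (s - t) / s ≠ 1 := by
        intro h
        have : s - t = s := by
          field_simp at h; linarith
        linarith
      have hlog := Real.log_lt_sub_one_of_pos hu0 hu1
      have hld : Real.log ((s - t) / s) = Real.log (s - t) - Real.log s :=
        Real.log_div hst.ne' hs0.ne'
      rw [hld] at hlog
      have hexp : (s - t) * (1 / s - 1 / (s - t)) = (s - t) / s - 1 := by
        field_simp
      rw [hexp]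
      linarith
  have key := hmono (Set.mem_Ici.mpr (le_refl 1))
      (Set.mem_Ici.mpr (le_of_lt hc)) hc
  have hc0 : (0 : ℝ) < c := by linarith
  have hct : (0 : ℝ) < c - t := by linarith
  have e1 : ψ 1 = (1 - t) * (-Real.log (1 - t)) := by
    simp [hψ, Real.log_one]
  have e2 : ψ c = (c - t) * (-Real.log (1 - t / c)) := by
    have h' : (1 : ℝ) - t / c = (c - t) / c := by field_simp
    rw [hψ]
    simp only [h', Real.log_div hct.ne' hc0.ne']
    ring
  rw [e1, e2] at key
  exact key

/-- the term ratio is strictly decreasing on (0,1). -/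
lemma aux_ratio {c : ℝ} (hc : 1 < c) :
    StrictAntiOn (fun t : ℝ => Real.log (1 - t / c) / Real.log (1 - t)) (Set.Ioo 0 1) := by
  have hc0 : (0 : ℝ) < c := by linarith
  have hderiv : ∀ t ∈ Set.Ioo (0:ℝ) 1,
      HasDerivAt (fun t : ℝ => Real.log (1 - t / c) / Real.log (1 - t))
        (((1 - t / c)⁻¹ * (-(1 / c)) * Real.log (1 - t) -
          Real.log (1 - t / c) * ((1 - t)⁻¹ * (-1))) / Real.log (1 - t) ^ 2) t := by
    intro t ht
    obtain ⟨ht0, ht1⟩ := ht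
    have h1t : (0 : ℝ) < 1 - t := by linarith
    have htc : t / c < 1 := by
      rw [div_lt_one hc0]; linarith
    have h1tc : (0 : ℝ) < 1 - t / c := by linarith
    have hDneg : Real.log (1 - t) < 0 := Real.log_neg h1t (by linarith)
    have hinner1 : HasDerivAt (fun t : ℝ => 1 - t / c) (-(1 / c)) t := by
      simpa using ((hasDerivAt_id t).div_const c).const_sub 1
    have hN : HasDerivAt (fun t : ℝ => Real.log (1 - t / c))
        ((1 - t / c)⁻¹ * (-(1 / c))) t :=
      by have := (Real.hasDerivAt_log h1tc.ne').comp t hinner1; exact this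
    have hinner2 : HasDerivAt (fun t : ℝ => 1 - t) (-1) t := by
      simpa using (hasDerivAt_id t).const_sub 1
    have hD : HasDerivAt (fun t : ℝ => Real.log (1 - t)) ((1 - t)⁻¹ * (-1)) t :=
      (Real.hasDerivAt_log h1t.ne').comp t hinner2
    exact hN.div hD hDneg.ne
  apply strictAntiOn_of_deriv_neg (convex_Ioo 0 1)
  · exact fun t ht => (hderiv t ht).continuousAt.continuousWithinAt
  · intro t ht
    rw [interior_Ioo] at ht
    obtain ⟨ht0, ht1⟩ := ht
    have h1t : (0 : ℝ) < 1 - t := by linarith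
    have hct : (0 : ℝ) < c - t := by linarith
    have htc : t / c < 1 := by rw [div_lt_one hc0]; linarith
    have h1tc : (0 : ℝ) < 1 - t / c := by linarith
    have hDneg : Real.log (1 - t) < 0 := Real.log_neg h1t (by linarith)
    rw [(hderiv t ⟨ht0, ht1⟩).deriv]
    apply div_neg_of_neg_of_pos
    · -- numerator negative
      have hpsi := aux_psi ht0 ht1 hc
      -- (1-t)(-log(1-t)) < (c-t)(-log(1-t/c))
      have hinv : (1 - t / c)⁻¹ * (1 / c) = 1 / (c - t) := by
        rw [eq_div_iff hct.ne']
        field_simp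
      have key : (1 - t / c)⁻¹ * (-(1 / c)) * Real.log (1 - t) -
          Real.log (1 - t / c) * ((1 - t)⁻¹ * (-1)) =
          -(Real.log (1 - t) / (c - t)) + Real.log (1 - t / c) / (1 - t) := by
        have : (1 - t / c)⁻¹ * (-(1 / c)) = -(1 / (c - t)) := by
          rw [← hinv]; ring
        rw [this]
        field_simp
        ring
      rw [key]
      have h2 : Real.log (1 - t / c) / (1 - t) < Real.log (1 - t) / (c - t) := by
        rw [div_lt_div_iff₀ h1t hct]
        nlinarith [hpsi]
      linarith
    · exact pow_two_pos_of_ne_zero hDneg.ne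

lemma aux_summable {t : ℝ} (ht0 : 0 < t) (ht1 : t < 1) :
    Summable (fun k : ℕ => Real.log (1 - t / ((k : ℝ) + 1) ^ 2)) := by
  have hbase : Summable (fun k : ℕ => (t / (1 - t)) * (1 / ((k : ℝ) + 1) ^ 2)) := by
    have h1 : Summable (fun n : ℕ => 1 / ((n : ℝ) ^ 2)) :=
      Real.summable_one_div_nat_pow.mpr one_lt_two
    have h2 : Summable (fun k : ℕ => 1 / (((k : ℝ) + 1) ^ 2)) := by
      have := (summable_nat_add_iff 1).mpr h1
      simpa using this
    exact h2.mul_left _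
  have key : ∀ k : ℕ, 0 < 1 - t / ((k : ℝ) + 1) ^ 2 ∧
      -Real.log (1 - t / ((k : ℝ) + 1) ^ 2) ≤ (t / (1 - t)) * (1 / ((k : ℝ) + 1) ^ 2) := by
    intro k
    have hk1 : (1 : ℝ) ≤ ((k : ℝ) + 1) ^ 2 := by
      have : (1 : ℝ) ≤ (k : ℝ) + 1 := by
        have := Nat.cast_nonneg (α := ℝ) k
        linarith
      nlinarith
    have hkpos : (0 : ℝ) < ((k : ℝ) + 1) ^ 2 := by positivity
    set u := t / ((k : ℝ) + 1) ^ 2 with hu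
    have hu0 : 0 < u := div_pos ht0 hkpos
    have hut : u ≤ t := by
      rw [hu, div_le_iff₀ hkpos]
      nlinarith
    have hu1 : u < 1 := lt_of_le_of_lt hut ht1
    have h1u : 0 < 1 - u := by linarith
    refine ⟨h1u, ?_⟩
    have hlog : Real.log ((1 - u)⁻¹) ≤ (1 - u)⁻¹ - 1 :=
      (Real.log_lt_sub_one_of_pos (by positivity)
        (by intro h; rw [inv_eq_one] at h; linarith)).le
    rw [Real.log_inv] at hlog
    have he : (1 - u)⁻¹ - 1 = u / (1 - u) := by field_simp; ring
    rw [he] at hlog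
    have hmon : u / (1 - u) ≤ u / (1 - t) := by
      apply div_le_div_of_nonneg_left hu0.le (by linarith) (by linarith)
    have : u / (1 - t) = (t / (1 - t)) * (1 / ((k : ℝ) + 1) ^ 2) := by
      rw [hu]; field_simp
    linarith
  have hsumneg : Summable (fun k : ℕ => -Real.log (1 - t / ((k : ℝ) + 1) ^ 2)) := by
    apply Summable.of_nonneg_of_le (fun k => ?_) (fun k => (key k).2) hbase
    have h1 := (key k).1
    have h2 : 1 - t / ((k : ℝ) + 1) ^ 2 ≤ 1 := by
      have : 0 ≤ t / ((k : ℝ) + 1) ^ 2 := by positivity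
      linarith
    have := Real.log_nonpos (by linarith) h2
    linarith
  simpa using hsumneg.neg

lemma aux_hasSum {x : ℝ} (hx : x ∈ Set.Ioo 0 π) :
    HasSum (fun k : ℕ => Real.log (1 - (x / π) ^ 2 / ((k : ℝ) + 1) ^ 2))
      (Real.log (Real.sin x / x)) := by
  obtain ⟨hx0, hxπ⟩ := hx
  have hπ : (0 : ℝ) < π := pi_pos
  have hz0 : 0 < x / π := div_pos hx0 hπ
  have hz1 : x / π < 1 := (div_lt_one hπ).mpr hxπ
  have ht0 : 0 < (x / π) ^ 2 := by positivity
  have ht1 : (x / π) ^ 2 < 1 := by nlinarith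
  have hS := aux_summable ht0 ht1
  -- partial products tend to sin x / x
  have hP : Tendsto (fun n : ℕ => ∏ j ∈ Finset.range n,
      ((1 : ℝ) - (x / π) ^ 2 / ((j : ℝ) + 1) ^ 2)) atTop (𝓝 (Real.sin x / x)) := by
    have h := Real.tendsto_euler_sin_prod (x / π)
    have hxx : π * (x / π) = x := by field_simp
    rw [hxx] at h
    have := h.div_const x
    apply this.congr'
    filter_upwards with n
    rw [mul_comm x, mul_div_assoc, div_self hx0.ne', mul_one]
  -- log of partial products equals partial sums of logs
  have hfacpos : ∀ j : ℕ, (0 : ℝ) < 1 - (x / π) ^ 2 / ((j : ℝ) + 1) ^ 2 := by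
    intro j
    have hk1 : (1 : ℝ) ≤ ((j : ℝ) + 1) ^ 2 := by
      have := Nat.cast_nonneg (α := ℝ) j
      nlinarith
    have hkpos : (0 : ℝ) < ((j : ℝ) + 1) ^ 2 := by positivity
    have : (x / π) ^ 2 / ((j : ℝ) + 1) ^ 2 < 1 := by
      rw [div_lt_one hkpos]
      linarith
    linarith
  have hlogprod : ∀ n : ℕ,
      Real.log (∏ j ∈ Finset.range n, ((1 : ℝ) - (x / π) ^ 2 / ((j : ℝ) + 1) ^ 2)) =
      ∑ j ∈ Finset.range n, Real.log (1 - (x / π) ^ 2 / ((j : ℝ) + 1) ^ 2) := by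
    intro n
    exact Real.log_prod (fun j _ => (hfacpos j).ne')
  have hsinx : 0 < Real.sin x / x := div_pos (Real.sin_pos_of_pos_of_lt_pi hx0 hxπ) hx0
  have hlogtendsto : Tendsto (fun n : ℕ => ∑ j ∈ Finset.range n,
      Real.log (1 - (x / π) ^ 2 / ((j : ℝ) + 1) ^ 2)) atTop (𝓝 (Real.log (Real.sin x / x))) := by
    have := ((Real.continuousAt_log hsinx.ne').tendsto).comp hP
    apply this.congr
    intro n
    exact hlogprod n
  have htsum := hS.hasSum.tendsto_sum_nat
  have := tendsto_nhds_unique htsum hlogtendsto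
  rw [← this]
  exact hS.hasSum

theorem stmt_9 :
    StrictAntiOn
      (fun x : ℝ => Real.log (Real.sin x / x) / Real.log ((π ^ 2 - x ^ 2) / π ^ 2))
      (Set.Ioo 0 π) := by
  intro x hx y hy hxy
  dsimp only
  have hπ : (0 : ℝ) < π := pi_pos
  have hrep : ∀ w ∈ Set.Ioo (0 : ℝ) π,
      Real.log (Real.sin w / w) / Real.log ((π ^ 2 - w ^ 2) / π ^ 2) =
      ∑' k : ℕ, Real.log (1 - (w / π) ^ 2 / ((k : ℝ) + 1) ^ 2) /
        Real.log (1 - (w / π) ^ 2) := by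
    intro w hw
    have h1 : (π ^ 2 - w ^ 2) / π ^ 2 = 1 - (w / π) ^ 2 := by
      field_simp
    rw [h1, ← (aux_hasSum hw).tsum_eq, tsum_div_const]
  rw [hrep x hx, hrep y hy]
  have hx1 : 0 < x / π := div_pos hx.1 hπ
  have hy1 : 0 < y / π := div_pos hy.1 hπ
  have hxy' : x / π < y / π := by gcongr
  have ht0 : 0 < (x / π) ^ 2 := by positivity
  have ht1 : (x / π) ^ 2 < 1 := by
    have : x / π < 1 := (div_lt_one hπ).mpr hx.2
    nlinarith
  have hs0 : 0 < (y / π) ^ 2 := by positivity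
  have hs1 : (y / π) ^ 2 < 1 := by
    have : y / π < 1 := (div_lt_one hπ).mpr hy.2
    nlinarith
  have hts : (x / π) ^ 2 < (y / π) ^ 2 := by nlinarith
  have htmem : (x / π) ^ 2 ∈ Set.Ioo (0 : ℝ) 1 := ⟨ht0, ht1⟩
  have hsmem : (y / π) ^ 2 ∈ Set.Ioo (0 : ℝ) 1 := ⟨hs0, hs1⟩
  have hlogt : Real.log (1 - (x / π) ^ 2) ≠ 0 :=
    (Real.log_neg (by linarith) (by linarith)).ne
  have hlogs : Real.log (1 - (y / π) ^ 2) ≠ 0 :=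
    (Real.log_neg (by linarith) (by linarith)).ne
  refine Summable.tsum_lt_tsum (i := 1) ?_ ?_ ?_ ?_
  · intro k
    match k with
    | 0 =>
      simp only [Nat.cast_zero, zero_add, one_pow, div_one]
      rw [div_self hlogs, div_self hlogt]
    | (n + 1) =>
      have hc : 1 < ((((n : ℕ) + 1 : ℕ) : ℝ) + 1) ^ 2 := by
        push_cast
        nlinarith [Nat.cast_nonneg (α := ℝ) n]
      exact (aux_ratio hc htmem hsmem hts).le
  · have hc : 1 < (((1 : ℕ) : ℝ) + 1) ^ 2 := by norm_num
    exact aux_ratio hc htmem hsmem hts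
  · exact (aux_hasSum hy).summable.div_const _
  · exact (aux_hasSum hx).summable.div_const _
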